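/- With $1 < D < 2$ and $R_n$ defined via the blocks $B_k$, one has $\lim_{n\to\infty} \frac{R_{2n}}{R_n} = D$ and $\lim_{n\to\infty}\frac{R_{n+1}}{R_n} = 1$. -/

import Mathlib

open Filter

noncomputable def Rseq (D : ℝ) (n : ℕ) : ℝ :=
  if n ≤ 1 then 1
  else Real.sqrt 2 * (D ^ (Nat.clog 2 n - 1) +
    ((n : ℝ) - 2 ^ (Nat.clog 2 n - 1) - 1) *
      (D ^ Nat.clog 2 n - D ^ (Nat.clog 2 n - 1)) / 2 ^ (Nat.clog 2 n - 1))

private lemma aux_div (c a e : ℝ) (hc : 0 < c) (ha : 1 ≤ a) (he : 0 ≤ e) :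
    c ≤ c * (a + e) / a ∧ c * (a + e) / a ≤ c + c * e := by
  have ha0 : 0 < a := lt_of_lt_of_le one_pos ha
  constructor
  · rw [le_div_iff₀ ha0]; nlinarith
  · rw [div_le_iff₀ ha0]
    nlinarith [mul_nonneg (mul_nonneg hc.le he) (sub_nonneg.mpr ha)]

private lemma Rseq_eq (D : ℝ) {n m : ℕ} (hm : Nat.clog 2 n = m + 1) (hn : 2 ≤ n) :
    Rseq D n = Real.sqrt 2 * D ^ m *
      (1 + ((n : ℝ) - 2 ^ m - 1) / 2 ^ m * (D - 1)) := by
  rw [Rseq, if_neg (by omega), hm]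
  simp only [Nat.add_sub_cancel, pow_succ]
  have h2 : (2 : ℝ) ^ m ≠ 0 := by positivity
  field_simp

private lemma clog_succ_aux {n : ℕ} (hn : 2 ≤ n) :
    ∃ m, Nat.clog 2 n = m + 1 ∧ 2 ^ m < n ∧ n ≤ 2 ^ (m + 1) := by
  obtain ⟨m, hm⟩ : ∃ m, Nat.clog 2 n = m + 1 :=
    ⟨Nat.clog 2 n - 1, by have := Nat.clog_pos (b := 2) (by norm_num) hn; omega⟩
  refine ⟨m, hm, ?_, ?_⟩
  · have := Nat.pow_pred_clog_lt_self (b := 2) (by norm_num) (show 1 < n by omega)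
    rwa [hm, Nat.pred_succ] at this
  · have := (Nat.clog_le_iff_le_pow (b := 2) (by norm_num) (x := n)
      (y := m + 1)).1 (le_of_eq hm)
    exact this

private lemma ratio_double (D : ℝ) (hD1 : 1 < D) (n : ℕ) (hn : 2 ≤ n) :
    D ≤ Rseq D (2 * n) / Rseq D n ∧
      Rseq D (2 * n) / Rseq D n ≤ D + D * (D - 1) / n := by
  obtain ⟨m, hm, hlow, hhigh⟩ := clog_succ_aux hn
  have hD0 : (0 : ℝ) < D := by linarith
  have hclog2 : Nat.clog 2 (2 * n) = (m + 1) + 1 := by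
    have hpow : (2 : ℕ) ^ (m + 2) = 2 * 2 ^ (m + 1) := by ring
    have hpow' : (2 : ℕ) ^ (m + 1) = 2 * 2 ^ m := by ring
    apply le_antisymm
    · rw [Nat.clog_le_iff_le_pow (by norm_num)]; omega
    · rw [Nat.succ_le_iff, Nat.lt_clog_iff_pow_lt (by norm_num)]; omega
  have hR1 := Rseq_eq D hm hn
  have hR2 := Rseq_eq D hclog2 (by omega)
  set a : ℝ := 1 + ((n : ℝ) - 2 ^ m - 1) / 2 ^ m * (D - 1) with ha_def
  have hP : (0 : ℝ) < 2 ^ m := by positivity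
  have hlowR : (2 : ℝ) ^ m + 1 ≤ (n : ℝ) := by
    have : ((2 ^ m + 1 : ℕ) : ℝ) ≤ (n : ℝ) := by exact_mod_cast hlow
    push_cast at this; linarith
  have hhighR : (n : ℝ) ≤ 2 ^ (m + 1) := by
    have : ((n : ℕ) : ℝ) ≤ ((2 ^ (m + 1) : ℕ) : ℝ) := by exact_mod_cast hhigh
    push_cast at this; linarith
  have ha1 : 1 ≤ a := by
    rw [ha_def]
    have ht : 0 ≤ ((n : ℝ) - 2 ^ m - 1) / 2 ^ m := div_nonneg (by linarith) (le_of_lt hP)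
    nlinarith [mul_nonneg ht (by linarith : (0:ℝ) ≤ D - 1)]
  have ha0 : 0 < a := lt_of_lt_of_le one_pos ha1
  have he : (0 : ℝ) ≤ (D - 1) / 2 ^ (m + 1) := div_nonneg (by linarith) (by positivity)
  have key : 1 + (((2 * n : ℕ) : ℝ) - 2 ^ (m + 1) - 1) / 2 ^ (m + 1) * (D - 1)
      = a + (D - 1) / 2 ^ (m + 1) := by
    rw [ha_def]
    push_cast
    have h2 : (2 : ℝ) ^ (m + 1) ≠ 0 := by positivity
    field_simp
    ring
  have hne : Real.sqrt 2 * D ^ m ≠ 0 := by positivity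
  have hratio : Rseq D (2 * n) / Rseq D n = D * (a + (D - 1) / 2 ^ (m + 1)) / a := by
    rw [hR1, hR2, key,
      show Real.sqrt 2 * D ^ (m + 1) * (a + (D - 1) / 2 ^ (m + 1))
        = (Real.sqrt 2 * D ^ m) * (D * (a + (D - 1) / 2 ^ (m + 1))) from by ring,
      mul_div_mul_left _ _ hne]
  obtain ⟨h1, h2⟩ := aux_div D a ((D - 1) / 2 ^ (m + 1)) hD0 ha1 he
  rw [hratio]
  refine ⟨h1, h2.trans ?_⟩
  have hn0 : (0 : ℝ) < (n : ℝ) := by exact_mod_cast (by omega : 0 < n)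
  have : D * ((D - 1) / 2 ^ (m + 1)) ≤ D * (D - 1) / n := by
    rw [mul_div_assoc]
    gcongr
  linarith

private lemma ratio_succ (D : ℝ) (hD1 : 1 < D) (n : ℕ) (hn : 2 ≤ n) :
    1 ≤ Rseq D (n + 1) / Rseq D n ∧
      Rseq D (n + 1) / Rseq D n ≤ 1 + 2 * (D - 1) / n := by
  obtain ⟨m, hm, hlow, hhigh⟩ := clog_succ_aux hn
  have hR1 := Rseq_eq D hm hn
  set a : ℝ := 1 + ((n : ℝ) - 2 ^ m - 1) / 2 ^ m * (D - 1) with ha_def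
  have hP : (0 : ℝ) < 2 ^ m := by positivity
  have hlowR : (2 : ℝ) ^ m + 1 ≤ (n : ℝ) := by
    have : ((2 ^ m + 1 : ℕ) : ℝ) ≤ (n : ℝ) := by exact_mod_cast hlow
    push_cast at this; linarith
  have hhighR : (n : ℝ) ≤ 2 ^ (m + 1) := by
    have : ((n : ℕ) : ℝ) ≤ ((2 ^ (m + 1) : ℕ) : ℝ) := by exact_mod_cast hhigh
    push_cast at this; linarith
  have ha1 : 1 ≤ a := by
    rw [ha_def]
    have ht : 0 ≤ ((n : ℝ) - 2 ^ m - 1) / 2 ^ m := div_nonneg (by linarith) (le_of_lt hP)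
    nlinarith [mul_nonneg ht (by linarith : (0:ℝ) ≤ D - 1)]
  have he : (0 : ℝ) ≤ (D - 1) / 2 ^ m := div_nonneg (by linarith) (le_of_lt hP)
  have hne : Real.sqrt 2 * D ^ m ≠ 0 := by
    have hD0 : (0 : ℝ) < D := by linarith
    positivity
  have hratio : Rseq D (n + 1) / Rseq D n = (a + (D - 1) / 2 ^ m) / a := by
    rcases lt_or_eq_of_le hhigh with hlt | heq
    · -- same block : clog 2 (n+1) = m + 1
      have hclog : Nat.clog 2 (n + 1) = m + 1 := by
        have hpow' : (2 : ℕ) ^ (m + 1) = 2 * 2 ^ m := by ring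
        apply le_antisymm
        · rw [Nat.clog_le_iff_le_pow (by norm_num)]; omega
        · rw [Nat.succ_le_iff, Nat.lt_clog_iff_pow_lt (by norm_num)]; omega
      have hR2 := Rseq_eq D hclog (by omega)
      have key : 1 + (((n + 1 : ℕ) : ℝ) - 2 ^ m - 1) / 2 ^ m * (D - 1)
          = a + (D - 1) / 2 ^ m := by
        rw [ha_def]; push_cast
        field_simp
        ring
      rw [hR1, hR2, key, mul_div_mul_left _ _ hne]
    · -- boundary : n = 2^(m+1)
      have hclog : Nat.clog 2 (n + 1) = (m + 1) + 1 := by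
        have hpow : (2 : ℕ) ^ (m + 2) = 2 * 2 ^ (m + 1) := by ring
        apply le_antisymm
        · rw [Nat.clog_le_iff_le_pow (by norm_num)]; omega
        · rw [Nat.succ_le_iff, Nat.lt_clog_iff_pow_lt (by norm_num)]; omega
      have hR2 := Rseq_eq D hclog (by omega)
      have hnR : (n : ℝ) = 2 ^ (m + 1) := by
        have : ((n : ℕ) : ℝ) = ((2 ^ (m + 1) : ℕ) : ℝ) := by exact_mod_cast heq
        push_cast at this; linarith
      have key : 1 + (((n + 1 : ℕ) : ℝ) - 2 ^ (m + 1) - 1) / 2 ^ (m + 1) * (D - 1)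
          = 1 := by
        push_cast
        rw [hnR]
        ring_nf
      have hDa : D = a + (D - 1) / 2 ^ m := by
        rw [ha_def, hnR]
        field_simp
        ring
      rw [hR1, hR2, key, mul_one,
        show Real.sqrt 2 * D ^ (m + 1) = (Real.sqrt 2 * D ^ m) * D from by ring,
        mul_div_mul_left _ _ hne, ← hDa]
  obtain ⟨h1, h2⟩ := aux_div 1 a ((D - 1) / 2 ^ m) one_pos ha1 he
  rw [one_mul] at h1 h2
  rw [hratio]
  refine ⟨h1, h2.trans ?_⟩
  have hn0 : (0 : ℝ) < (n : ℝ) := by exact_mod_cast (by omega : 0 < n)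
  have h2pm : (n : ℝ) ≤ 2 * 2 ^ m := by
    have : (2 : ℝ) ^ (m + 1) = 2 * 2 ^ m := by ring
    linarith
  have : (D - 1) / 2 ^ m ≤ 2 * (D - 1) / n := by
    rw [div_le_div_iff₀ hP hn0]
    nlinarith [mul_le_mul_of_nonneg_left h2pm (by linarith : (0:ℝ) ≤ D - 1)]
  linarith

theorem Rseq_ratio_limits (D : ℝ) (hD1 : 1 < D) (hD2 : D < 2) :
    Tendsto (fun n : ℕ => Rseq D (2 * n) / Rseq D n) atTop (nhds D) ∧
      Tendsto (fun n : ℕ => Rseq D (n + 1) / Rseq D n) atTop (nhds 1) := by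
  have hinv : Tendsto (fun n : ℕ => ((n : ℝ))⁻¹) atTop (nhds 0) :=
    tendsto_inv_atTop_zero.comp tendsto_natCast_atTop_atTop
  constructor
  · refine tendsto_of_tendsto_of_tendsto_of_le_of_le'
      (g := fun _ : ℕ => D) (h := fun n : ℕ => D + D * (D - 1) / n)
      tendsto_const_nhds ?_ ?_ ?_
    · have : Tendsto (fun n : ℕ => D + D * (D - 1) * (n : ℝ)⁻¹) atTop (nhds (D + D * (D-1) * 0)) :=
        tendsto_const_nhds.add (tendsto_const_nhds.mul hinv)
      simpa [div_eq_mul_inv] using this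
    · filter_upwards [eventually_ge_atTop 2] with n hn using (ratio_double D hD1 n hn).1
    · filter_upwards [eventually_ge_atTop 2] with n hn using (ratio_double D hD1 n hn).2
  · refine tendsto_of_tendsto_of_tendsto_of_le_of_le'
      (g := fun _ : ℕ => (1:ℝ)) (h := fun n : ℕ => 1 + 2 * (D - 1) / n)
      tendsto_const_nhds ?_ ?_ ?_
    · have : Tendsto (fun n : ℕ => 1 + 2 * (D - 1) * (n : ℝ)⁻¹) atTop (nhds (1 + 2 * (D-1) * 0)) :=
        tendsto_const_nhds.add (tendsto_const_nhds.mul hinv)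
      simpa [div_eq_mul_inv] using this
    · filter_upwards [eventually_ge_atTop 2] with n hn using (ratio_succ D hD1 n hn).1
    · filter_upwards [eventually_ge_atTop 2] with n hn using (ratio_succ D hD1 n hn).2
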